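/- Let W be an SW-deterministic Wang tile set and T = T(W) the associated automaton with semigroup S(T). If S(T) is infinite, then W admits a valid tiling of the square [0,ℓ] × [0,ℓ] for every ℓ ∈ ℕ (hence admits a ℤ²-tiling). -/

import Mathlib

/-- A Wang tile over a set of colors `C`. -/
structure WangTile (C : Type*) where
  west : C
  south : C
  east : C
  north : C
deriving DecidableEq

variable {C : Type*}

/-- `f` is a valid tiling of the discrete plane `ℤ²` by the tile set `W`. -/
def IsZTiling (W : Finset (WangTile C)) (f : ℤ × ℤ → WangTile C) : Prop :=
  ∀ x y : ℤ, f (x, y) ∈ W ∧ (f (x, y)).east = (f (x + 1, y)).west ∧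
    (f (x, y)).north = (f (x, y + 1)).south

/-- `g` is a valid tiling of the first quadrant `ℕ²` by the tile set `W`. -/
def IsNTiling (W : Finset (WangTile C)) (g : ℕ × ℕ → WangTile C) : Prop :=
  ∀ x y : ℕ, g (x, y) ∈ W ∧ (g (x, y)).east = (g (x + 1, y)).west ∧
    (g (x, y)).north = (g (x, y + 1)).south

/-- A `ℤ²`-tiling is periodic if it has a nonzero periodicity vector. -/
def PeriodicTiling (f : ℤ × ℤ → WangTile C) : Prop :=
  ∃ v : ℤ × ℤ, v ≠ 0 ∧ ∀ t : ℤ × ℤ, f (t + v) = f t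

/-- An `ℕ²`-tiling is y-recurrent if two distinct rows have the same horizontal word
(sequence of south colors). -/
def YRecurrent (g : ℕ × ℕ → WangTile C) : Prop :=
  ∃ i j : ℕ, i ≠ j ∧ ∀ x : ℕ, (g (x, i)).south = (g (x, j)).south

variable {Q A : Type*}

/-- The (partial) state reached after reading the first `n` letters of `ξ` from state `q`
in the deterministic partial automaton `δ`. -/
def pstate (δ : Q → A → Option (A × Q)) (ξ : ℕ → A) (q : Q) : ℕ → Option Q
  | 0 => some q
  | n + 1 => (pstate δ ξ q n).bind fun s => (δ s (ξ n)).map Prod.snd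

/-- The (partial) output letter at position `n` when reading `ξ` from state `q`. -/
def pout (δ : Q → A → Option (A × Q)) (ξ : ℕ → A) (q : Q) (n : ℕ) : Option A :=
  (pstate δ ξ q n).bind fun s => (δ s (ξ n)).map Prod.fst

open Classical in
/-- The partial action of a state `q` on an infinite word `ξ`. -/
noncomputable def pact (δ : Q → A → Option (A × Q)) (q : Q) (ξ : ℕ → A) : Option (ℕ → A) :=
  if h : ∀ n, (pout δ ξ q n).isSome then some fun n => (pout δ ξ q n).get (h n) else none

/-- The partial action of a state sequence `q_n … q_1` (rightmost acting first). -/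
noncomputable def pactW (δ : Q → A → Option (A × Q)) : List Q → (ℕ → A) → Option (ℕ → A)
  | [], ξ => some ξ
  | q :: w, ξ => (pactW δ w ξ).bind (pact δ q)

/-- The orbit `Q* ∘ ξ` of an infinite word. -/
def orbitP (δ : Q → A → Option (A × Q)) (ξ : ℕ → A) : Set (ℕ → A) :=
  {η | ∃ w : List Q, pactW δ w ξ = some η}

/-- The semigroup generated by the automaton: all partial maps on infinite words induced by
nonempty state sequences. -/
def sgpP (δ : Q → A → Option (A × Q)) : Set ((ℕ → A) → Option (ℕ → A)) :=
  {F | ∃ w : List Q, w ≠ [] ∧ F = pactW δ w}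

variable [DecidableEq C]

/-- The (at most one, by SW-determinism) tile of `W` with west color `q` and south color `a`. -/
noncomputable def stepTile (W : Finset (WangTile C)) (q a : C) : Option (WangTile C) :=
  (W.filter fun t => t.west = q ∧ t.south = a).toList.head?

/-- The transition function of the automaton `T(W)` associated to an SW-deterministic tile
set: states and letters are colors; on state `q` (west) and input `a` (south) it outputs the
north color and moves to the east color of the unique matching tile. -/
noncomputable def deltaW (W : Finset (WangTile C)) : C → C → Option (C × C) :=
  fun q a => (stepTile W q a).map fun t => (t.north, t.east)

/-- `W` is SW-deterministic. -/
def SWDet (W : Finset (WangTile C)) : Prop :=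
  ∀ t ∈ W, ∀ t' ∈ W, t.south = t'.south → t.west = t'.west → t = t'

/-- `W` admits a valid tiling of the square `[0,ℓ] × [0,ℓ]`. -/
def TilesSquare (W : Finset (WangTile C)) (l : ℕ) : Prop :=
  ∃ f : ℤ × ℤ → WangTile C,
    (∀ x y : ℤ, 0 ≤ x → x ≤ l → 0 ≤ y → y ≤ l → f (x, y) ∈ W) ∧
    (∀ x y : ℤ, 0 ≤ x → x + 1 ≤ l → 0 ≤ y → y ≤ l → (f (x, y)).east = (f (x + 1, y)).west) ∧
    (∀ x y : ℤ, 0 ≤ x → x ≤ l → 0 ≤ y → y + 1 ≤ l → (f (x, y)).north = (f (x, y + 1)).south)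


section MyAux

variable {C : Type*} [DecidableEq C]

lemma stepTile_spec {W : Finset (WangTile C)} {q a : C} {t : WangTile C}
    (h : stepTile W q a = some t) : t ∈ W ∧ t.west = q ∧ t.south = a := by
  have ht : t ∈ (W.filter fun t => t.west = q ∧ t.south = a).toList :=
    List.mem_of_mem_head? (Option.mem_def.mpr h)
  rw [Finset.mem_toList, Finset.mem_filter] at ht
  exact ⟨ht.1, ht.2.1, ht.2.2⟩

lemma pact_none_of_not_west {W : Finset (WangTile C)} {q : C}
    (h : ∀ t ∈ W, t.west ≠ q) (ξ : ℕ → C) : pact (deltaW W) q ξ = none := by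
  rw [pact, dif_neg]
  push_neg
  refine ⟨0, ?_⟩
  have hst : stepTile W q (ξ 0) = none := by
    rw [stepTile]
    have he : W.filter (fun t => t.west = q ∧ t.south = ξ 0) = ∅ :=
      Finset.filter_eq_empty_iff.mpr (fun {t} ht hc => h t ht hc.1)
    rw [he, Finset.toList_empty]
    rfl
  simp [pout, pstate, deltaW, hst]

lemma pactW_none_of_bad {W : Finset (WangTile C)} {w : List C} {q : C}
    (hq : q ∈ w) (h : ∀ t ∈ W, t.west ≠ q) (ξ : ℕ → C) :
    pactW (deltaW W) w ξ = none := by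
  induction w generalizing ξ with
  | nil => simp at hq
  | cons a w ih =>
    rw [pactW]
    rcases List.mem_cons.mp hq with rfl | hq'
    · cases hx : pactW (deltaW W) w ξ <;> simp [pact_none_of_not_west h]
    · rw [ih hq']; rfl

lemma exists_long_success {W : Finset (WangTile C)}
    (hinf : (sgpP (deltaW W)).Infinite) (L : ℕ) :
    ∃ (w : List C) (ξ η : ℕ → C), L ≤ w.length ∧ pactW (deltaW W) w ξ = some η := by
  classical
  by_contra hcon
  push_neg at hcon
  apply hinf
  have hnone : ∀ w : List C, L ≤ w.length → pactW (deltaW W) w = fun _ => none := by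
    intro w hw; funext ξ
    cases hx : pactW (deltaW W) w ξ with
    | none => rfl
    | some η => exact absurd hx (hcon w ξ η hw)
  set QW := W.image WangTile.west with hQW
  have hsub : sgpP (deltaW W) ⊆ insert (fun _ => (none : Option (ℕ → C)))
      ((fun w : List {x // x ∈ QW} => pactW (deltaW W) (w.map Subtype.val)) ''
        {w | w.length < L}) := by
    rintro F ⟨w, hw0, rfl⟩
    by_cases hlen : L ≤ w.length
    · exact Set.mem_insert_iff.mpr (Or.inl (hnone w hlen))
    · by_cases hall : ∀ q ∈ w, q ∈ QW
      · refine Set.mem_insert_iff.mpr (Or.inr ?_)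
        refine ⟨w.pmap (fun q h => ⟨q, h⟩) hall, ?_, ?_⟩
        · simpa [Set.mem_setOf_eq] using lt_of_not_ge hlen
        · show pactW (deltaW W) ((w.pmap (fun q h => (⟨q, h⟩ : {x // x ∈ QW})) hall).map Subtype.val)
              = pactW (deltaW W) w
          rw [List.map_pmap]
          simp
      · push_neg at hall
        obtain ⟨q, hqw, hqQW⟩ := hall
        refine Set.mem_insert_iff.mpr (Or.inl ?_)
        funext ξ
        refine pactW_none_of_bad hqw (fun t ht hc => hqQW ?_) ξ
        rw [hQW]
        exact Finset.mem_image.mpr ⟨t, ht, hc⟩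
  exact Set.Finite.subset
    ((Set.Finite.image _ (List.finite_length_lt _ L)).insert _) hsub

lemma row_success {W : Finset (WangTile C)} {q : C} {ξ η : ℕ → C}
    (h : pact (deltaW W) q ξ = some η) :
    ∃ T : ℕ → WangTile C, (∀ n, T n ∈ W) ∧ (∀ n, (T n).south = ξ n) ∧
      (∀ n, (T n).north = η n) ∧ (∀ n, (T n).east = (T (n + 1)).west) := by
  classical
  rw [pact] at h
  split_ifs at h with hall
  · have hη : (fun n => (pout (deltaW W) ξ q n).get (hall n)) = η := Option.some.inj h
    have key : ∀ n, ∃ t : WangTile C, (∃ s, pstate (deltaW W) ξ q n = some s ∧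
        stepTile W s (ξ n) = some t) ∧ pstate (deltaW W) ξ q (n + 1) = some t.east ∧
        η n = t.north := by
      intro n
      have h1 := hall n
      rw [pout] at h1
      cases hs : pstate (deltaW W) ξ q n with
      | none => rw [hs] at h1; simp at h1
      | some s =>
        rw [hs] at h1
        cases ht : stepTile W s (ξ n) with
        | none => rw [Option.bind_some, deltaW, ht] at h1; simp at h1
        | some t =>
          refine ⟨t, ⟨s, rfl, ht⟩, ?_, ?_⟩
          · show (pstate (deltaW W) ξ q n).bind _ = _
            rw [hs, Option.bind_some, deltaW, ht]
            rfl
          · rw [← hη]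
            have hpout : pout (deltaW W) ξ q n = some t.north := by
              rw [pout, hs, Option.bind_some, deltaW, ht]
              rfl
            simp [hpout]
    refine ⟨fun n => (key n).choose, fun n => ?_, fun n => ?_, fun n => ?_, fun n => ?_⟩
    · obtain ⟨⟨s, _, hst⟩, _, _⟩ := (key n).choose_spec
      exact (stepTile_spec hst).1
    · obtain ⟨⟨s, _, hst⟩, _, _⟩ := (key n).choose_spec
      exact (stepTile_spec hst).2.2
    · exact ((key n).choose_spec.2.2).symm
    · obtain ⟨⟨s, hs, hst⟩, he, _⟩ := (key n).choose_spec
      obtain ⟨⟨s', hs', hst'⟩, _, _⟩ := (key (n + 1)).choose_spec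
      have hss : s' = ((key n).choose).east := Option.some.inj (hs'.symm.trans he)
      rw [(stepTile_spec hst').2.1]
      exact hss.symm

lemma chain_of_pactW {Q A : Type*} {δ : Q → A → Option (A × Q)} {w : List Q} {ξ η : ℕ → A}
    (h : pactW δ w ξ = some η) :
    ∃ ρ : ℕ → (ℕ → A), ρ 0 = ξ ∧
      ∀ i < w.length, ∃ q, pact δ q (ρ i) = some (ρ (i + 1)) := by
  suffices H : ∃ ρ : ℕ → (ℕ → A), ρ 0 = ξ ∧ ρ w.length = η ∧
      ∀ i < w.length, ∃ q, pact δ q (ρ i) = some (ρ (i + 1)) by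
    obtain ⟨ρ, h1, _, h3⟩ := H
    exact ⟨ρ, h1, h3⟩
  induction w generalizing η with
  | nil =>
    have : ξ = η := Option.some.inj (by simpa [pactW] using h)
    exact ⟨fun _ => ξ, rfl, this, by simp⟩
  | cons a w ih =>
    rw [pactW] at h
    obtain ⟨μ, hμ, ha⟩ := Option.bind_eq_some_iff.mp h
    obtain ⟨ρ', h1, h2, h3⟩ := ih hμ
    refine ⟨fun i => if i = w.length + 1 then η else ρ' i, ?_, ?_, ?_⟩
    · simp [h1]
    · simp [List.length_cons]
    · intro i hi
      simp only [List.length_cons] at hi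
      rcases Nat.lt_succ_iff_lt_or_eq.mp hi with hi' | rfl
      · obtain ⟨q, hq⟩ := h3 i hi'
        refine ⟨q, ?_⟩
        show pact δ q (if i = w.length + 1 then η else ρ' i) =
          some (if i + 1 = w.length + 1 then η else ρ' (i + 1))
        rw [if_neg (by omega), if_neg (by omega)]
        exact hq
      · refine ⟨a, ?_⟩
        show pact δ a (if w.length = w.length + 1 then η else ρ' w.length) =
          some (if w.length + 1 = w.length + 1 then η else ρ' (w.length + 1))
        rw [if_neg (by omega), if_pos rfl, h2]
        exact ha

lemma tiles_square {W : Finset (WangTile C)}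
    (hinf : (sgpP (deltaW W)).Infinite) (l : ℕ) : TilesSquare W l := by
  classical
  obtain ⟨w, ξ, η, hlen, hact⟩ := exists_long_success hinf (l + 1)
  obtain ⟨ρ, hρ0, hchain⟩ := chain_of_pactW hact
  have hrow : ∀ i, i < w.length → ∃ T : ℕ → WangTile C, (∀ n, T n ∈ W) ∧
      (∀ n, (T n).south = ρ i n) ∧ (∀ n, (T n).north = ρ (i + 1) n) ∧
      (∀ n, (T n).east = (T (n + 1)).west) := by
    intro i hi
    obtain ⟨q, hq⟩ := hchain i hi
    exact row_success hq
  have hW : W.Nonempty := by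
    have h0 : 0 < w.length := lt_of_lt_of_le (Nat.succ_pos l) hlen
    obtain ⟨T, hT, _⟩ := hrow 0 h0
    exact ⟨T 0, hT 0⟩
  set R : ℕ → ℕ → WangTile C :=
    fun i => if h : i < w.length then (hrow i h).choose else fun _ => hW.choose with hR
  have hRspec : ∀ i, i < w.length → (∀ n, R i n ∈ W) ∧
      (∀ n, (R i n).south = ρ i n) ∧ (∀ n, (R i n).north = ρ (i + 1) n) ∧
      (∀ n, (R i n).east = (R i (n + 1)).west) := by
    intro i h
    simp only [hR, dif_pos h]
    exact (hrow i h).choose_spec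
  refine ⟨fun p => R p.2.toNat p.1.toNat, ?_, ?_, ?_⟩
  · intro x y hx0 hxl hy0 hyl
    exact (hRspec y.toNat (by omega)).1 x.toNat
  · intro x y hx0 hxl hy0 hyl
    have h1 : (x + 1).toNat = x.toNat + 1 := by omega
    show (R y.toNat x.toNat).east = (R (x + 1, y).2.toNat (x + 1, y).1.toNat).west
    simp only []
    rw [h1]
    exact (hRspec y.toNat (by omega)).2.2.2 x.toNat
  · intro x y hx0 hxl hy0 hyl
    have h1 : (y + 1).toNat = y.toNat + 1 := by omega
    show (R y.toNat x.toNat).north = (R (x, y + 1).2.toNat (x, y + 1).1.toNat).south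
    simp only []
    rw [h1]
    rw [(hRspec y.toNat (by omega)).2.2.1 x.toNat,
      (hRspec (y.toNat + 1) (by omega)).2.1 x.toNat]

lemma ztiling_of_squares {W : Finset (WangTile C)} (hsq : ∀ l : ℕ, TilesSquare W l) :
    ∃ f : ℤ × ℤ → WangTile C, IsZTiling W f := by
  classical
  have hg : ∀ n : ℕ, ∃ g : ℤ × ℤ → WangTile C,
      (∀ x y : ℤ, -(n : ℤ) ≤ x → x ≤ n → -(n : ℤ) ≤ y → y ≤ n → g (x, y) ∈ W) ∧
      (∀ x y : ℤ, -(n : ℤ) ≤ x → x + 1 ≤ n → -(n : ℤ) ≤ y → y ≤ n →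
        (g (x, y)).east = (g (x + 1, y)).west) ∧
      (∀ x y : ℤ, -(n : ℤ) ≤ x → x ≤ n → -(n : ℤ) ≤ y → y + 1 ≤ n →
        (g (x, y)).north = (g (x, y + 1)).south) := by
    intro n
    obtain ⟨f, h1, h2, h3⟩ := hsq (2 * n)
    refine ⟨fun p => f (p.1 + n, p.2 + n), ?_, ?_, ?_⟩ <;> intro x y hx1 hx2 hy1 hy2
    · exact h1 _ _ (by omega) (by push_cast; omega) (by omega) (by push_cast; omega)
    · have e : (x + 1 + (n : ℤ)) = (x + n) + 1 := by ring
      show (f (x + n, y + n)).east = (f (x + 1 + n, y + n)).west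
      rw [e]
      exact h2 _ _ (by omega) (by push_cast; omega) (by omega) (by push_cast; omega)
    · have e : (y + 1 + (n : ℤ)) = (y + n) + 1 := by ring
      show (f (x + n, y + n)).north = (f (x + n, y + 1 + n)).south
      rw [e]
      exact h3 _ _ (by omega) (by push_cast; omega) (by omega) (by push_cast; omega)
  choose g hmem heast hnorth using hg
  obtain ⟨U, hU⟩ := Ultrafilter.exists_le (Filter.atTop : Filter ℕ)
  have key : ∀ p : ℤ × ℤ, ∃ t ∈ W, {n : ℕ | g n p = t} ∈ U := by
    rintro ⟨px, py⟩
    have hS : {n : ℕ | g n (px, py) ∈ W} ∈ U := by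
      refine Filter.mem_of_superset (hU (Filter.mem_atTop (px.natAbs + py.natAbs))) ?_
      intro n hn
      simp only [Set.mem_setOf_eq] at hn
      exact hmem n px py (by omega) (by omega) (by omega) (by omega)
    have hsub : {n : ℕ | g n (px, py) ∈ W} ⊆
        ⋃ t ∈ (W : Set (WangTile C)), {n : ℕ | g n (px, py) = t} := by
      intro n hn
      exact Set.mem_biUnion hn rfl
    have := (Ultrafilter.finite_biUnion_mem_iff W.finite_toSet).mp
      (Filter.mem_of_superset hS hsub)
    obtain ⟨t, ht, hmemU⟩ := this
    exact ⟨t, ht, hmemU⟩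
  refine ⟨fun p => (key p).choose, ?_⟩
  intro x y
  obtain ⟨ht1, ht2⟩ := (key (x, y)).choose_spec
  obtain ⟨he1, he2⟩ := (key (x + 1, y)).choose_spec
  obtain ⟨hn1, hn2⟩ := (key (x, y + 1)).choose_spec
  refine ⟨ht1, ?_, ?_⟩
  · have hD : {n : ℕ | x.natAbs + 1 + y.natAbs ≤ n} ∈ U :=
      hU (Filter.mem_atTop (x.natAbs + 1 + y.natAbs))
    have hI := Filter.inter_mem (Filter.inter_mem ht2 he2) hD
    obtain ⟨n, ⟨hA, hB⟩, hN⟩ := Filter.nonempty_of_mem hI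
    simp only [Set.mem_setOf_eq] at hA hB hN
    show ((key (x, y)).choose).east = ((key (x + 1, y)).choose).west
    rw [← hA, ← hB]
    exact heast n x y (by omega) (by omega) (by omega) (by omega)
  · have hD : {n : ℕ | x.natAbs + 1 + y.natAbs ≤ n} ∈ U :=
      hU (Filter.mem_atTop (x.natAbs + 1 + y.natAbs))
    have hI := Filter.inter_mem (Filter.inter_mem ht2 hn2) hD
    obtain ⟨n, ⟨hA, hB⟩, hN⟩ := Filter.nonempty_of_mem hI
    simp only [Set.mem_setOf_eq] at hA hB hN
    show ((key (x, y)).choose).north = ((key (x, y + 1)).choose).south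
    rw [← hA, ← hB]
    exact hnorth n x y (by omega) (by omega) (by omega) (by omega)

end MyAux

/-- If `W` is SW-deterministic and the semigroup generated by the associated automaton
`T(W)` is infinite, then `W` tiles every square `[0,ℓ] × [0,ℓ]`, and hence admits a
`ℤ²`-tiling. -/
theorem stmt14 (W : Finset (WangTile C)) (hsw : SWDet W)
    (hinf : (sgpP (deltaW W)).Infinite) :
    (∀ l : ℕ, TilesSquare W l) ∧ ∃ f : ℤ × ℤ → WangTile C, IsZTiling W f := by
  have hsq : ∀ l : ℕ, TilesSquare W l := fun l => tiles_square hinf l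
  exact ⟨hsq, ztiling_of_squares hsq⟩
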